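/- Let v_1, …, v_{n+1} be points in Euclidean space ℝ^n, and let Q be the n×n Gram matrix with entries Q_{ij} = ⟨v_i − v_{n+1}, v_j − v_{n+1}⟩ for 1 ≤ i, j ≤ n. Then the n-dimensional Lebesgue measure of the convex hull of {v_1, …, v_{n+1}} equals √(det Q) / n!. -/

import Mathlib

open Finset MeasureTheory
open scoped RealInnerProductSpace

/-- The "corner simplex" of size `c` in `ℝⁿ`. -/
def cornerSet (n : ℕ) (c : ℝ) : Set (Fin n → ℝ) :=
  {x | (∀ i, 0 ≤ x i) ∧ ∑ i, x i ≤ c}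

lemma isClosed_cornerSet (n : ℕ) (c : ℝ) : IsClosed (cornerSet n c) := by
  have : cornerSet n c = (⋂ i, {x : Fin n → ℝ | 0 ≤ x i}) ∩ {x | ∑ i, x i ≤ c} := by
    ext x; simp [cornerSet]
  rw [this]
  exact (isClosed_iInter fun i =>
    isClosed_le continuous_const (continuous_apply i)).inter
    (isClosed_le (continuous_finset_sum _ fun i _ => continuous_apply i) continuous_const)

lemma measurableSet_cornerSet (n : ℕ) (c : ℝ) : MeasurableSet (cornerSet n c) :=
  (isClosed_cornerSet n c).measurableSet

lemma volume_cornerSet : ∀ (n : ℕ) (c : ℝ), 0 ≤ c →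
    volume (cornerSet n c) = ENNReal.ofReal (c ^ n / n.factorial) := by
  intro n
  induction n with
  | zero =>
    intro c hc
    have : cornerSet 0 c = Set.univ := by
      ext x; simp [cornerSet, hc]
    rw [this]
    simp [MeasureTheory.volume_pi, Measure.pi_univ]
  | succ n ih =>
    intro c hc
    set e := MeasurableEquiv.piFinSuccAbove (fun _ : Fin (n + 1) => ℝ) 0 with he
    have hmp : MeasurePreserving e.symm
        ((volume : Measure ℝ).prod (volume : Measure (Fin n → ℝ))) volume := by
      have := (measurePreserving_piFinSuccAbove (fun _ : Fin (n + 1) => (volume : Measure ℝ)) 0).symm e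
      rwa [← MeasureTheory.volume_pi] at this
    have h1 : volume (cornerSet (n + 1) c)
        = ((volume : Measure ℝ).prod (volume : Measure (Fin n → ℝ)))
          (e.symm ⁻¹' cornerSet (n + 1) c) :=
      (hmp.measure_preimage (measurableSet_cornerSet _ _).nullMeasurableSet).symm
    have h2 : e.symm ⁻¹' cornerSet (n + 1) c
        = {p : ℝ × (Fin n → ℝ) | 0 ≤ p.1 ∧ (∀ i, 0 ≤ p.2 i) ∧ p.1 + ∑ i, p.2 i ≤ c} := by
      ext ⟨t, y⟩
      simp only [Set.mem_preimage, cornerSet, Set.mem_setOf_eq, he,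
        MeasurableEquiv.piFinSuccAbove_symm_apply, Fin.insertNth_zero]
      rw [Fin.forall_fin_succ]
      simp [Fin.sum_univ_succ, and_assoc]
    have hslice : ∀ t : ℝ,
        (volume : Measure (Fin n → ℝ)) (Prod.mk t ⁻¹'
          {p : ℝ × (Fin n → ℝ) | 0 ≤ p.1 ∧ (∀ i, 0 ≤ p.2 i) ∧ p.1 + ∑ i, p.2 i ≤ c})
        = Set.indicator (Set.Icc 0 c)
            (fun t => ENNReal.ofReal ((c - t) ^ n / n.factorial)) t := by
      intro t
      by_cases ht : t ∈ Set.Icc 0 c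
      · have : Prod.mk t ⁻¹'
            {p : ℝ × (Fin n → ℝ) | 0 ≤ p.1 ∧ (∀ i, 0 ≤ p.2 i) ∧ p.1 + ∑ i, p.2 i ≤ c}
            = cornerSet n (c - t) := by
          ext y
          simp only [Set.mem_preimage, Set.mem_setOf_eq, cornerSet]
          constructor
          · rintro ⟨_, h1, h2⟩; exact ⟨h1, by linarith⟩
          · rintro ⟨h1, h2⟩; exact ⟨ht.1, h1, by linarith⟩
        rw [this, ih _ (by linarith [ht.2]), Set.indicator_of_mem ht]
      · have : Prod.mk t ⁻¹'
            {p : ℝ × (Fin n → ℝ) | 0 ≤ p.1 ∧ (∀ i, 0 ≤ p.2 i) ∧ p.1 + ∑ i, p.2 i ≤ c}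
            = (∅ : Set (Fin n → ℝ)) := by
          ext y
          simp only [Set.mem_preimage, Set.mem_setOf_eq, Set.mem_empty_iff_false,
            iff_false, not_and]
          intro h1 h2
          rw [Set.mem_Icc, not_and_or, not_le, not_le] at ht
          rcases ht with ht | ht
          · linarith
          · have : 0 ≤ ∑ i, y i := Finset.sum_nonneg fun i _ => h2 i
            linarith
        rw [this, Set.indicator_of_notMem ht]
        simp
    have hTm : MeasurableSet
        {p : ℝ × (Fin n → ℝ) | 0 ≤ p.1 ∧ (∀ i, 0 ≤ p.2 i) ∧ p.1 + ∑ i, p.2 i ≤ c} := by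
      have : IsClosed {p : ℝ × (Fin n → ℝ) | 0 ≤ p.1 ∧ (∀ i, 0 ≤ p.2 i) ∧ p.1 + ∑ i, p.2 i ≤ c} := by
        have hA : IsClosed {p : ℝ × (Fin n → ℝ) | 0 ≤ p.1} :=
          isClosed_le continuous_const continuous_fst
        have hB : IsClosed (⋂ i, {p : ℝ × (Fin n → ℝ) | 0 ≤ p.2 i}) :=
          isClosed_iInter fun i =>
            isClosed_le continuous_const ((continuous_apply i).comp continuous_snd)
        have hC : IsClosed {p : ℝ × (Fin n → ℝ) | p.1 + ∑ i, p.2 i ≤ c} :=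
          isClosed_le (continuous_fst.add (continuous_finset_sum _ fun i _ => (continuous_apply i).comp continuous_snd)) continuous_const
        have : {p : ℝ × (Fin n → ℝ) | 0 ≤ p.1 ∧ (∀ i, 0 ≤ p.2 i) ∧ p.1 + ∑ i, p.2 i ≤ c}
            = ({p : ℝ × (Fin n → ℝ) | 0 ≤ p.1} ∩ (⋂ i, {p : ℝ × (Fin n → ℝ) | 0 ≤ p.2 i})
              ∩ {p : ℝ × (Fin n → ℝ) | p.1 + ∑ i, p.2 i ≤ c}) := by
          ext p; simp only [Set.mem_setOf_eq, Set.mem_inter_iff, Set.mem_iInter]; tauto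
        rw [this]
        exact (hA.inter hB).inter hC
      exact this.measurableSet
    rw [h1, h2, Measure.prod_apply hTm]
    simp_rw [hslice]
    rw [lintegral_indicator measurableSet_Icc]
    have hint : IntegrableOn (fun t : ℝ => (c - t) ^ n / n.factorial) (Set.Icc 0 c) := by
      apply Continuous.integrableOn_Icc
      continuity
    have hpos : 0 ≤ᵐ[(volume : Measure ℝ).restrict (Set.Icc 0 c)]
        fun t : ℝ => (c - t) ^ n / n.factorial := by
      filter_upwards [ae_restrict_mem measurableSet_Icc] with t ht
      have : (0:ℝ) ≤ (c - t) ^ n := pow_nonneg (by linarith [ht.2]) n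
      positivity
    rw [← ofReal_integral_eq_lintegral_ofReal hint hpos]
    congr 1
    rw [MeasureTheory.integral_Icc_eq_integral_Ioc,
      ← intervalIntegral.integral_of_le hc]
    have : (∫ t in (0:ℝ)..c, (c - t) ^ n / n.factorial)
        = (∫ t in (0:ℝ)..c, (c - t) ^ n) / n.factorial := by
      simp [intervalIntegral.integral_div]
    rw [this]
    have : (∫ t in (0:ℝ)..c, (c - t) ^ n) = ∫ x in (c - c)..(c - 0), x ^ n :=
      intervalIntegral.integral_comp_sub_left (fun x => x ^ n) c
    rw [this]
    simp only [sub_self, sub_zero]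
    rw [integral_pow]
    simp only [ne_eq, zero_pow, Nat.factorial_succ]
    push_cast
    field_simp
    simp

noncomputable def sumSmulMap {m : ℕ} {E : Type*} [AddCommGroup E] [Module ℝ E]
    (f : Fin m → E) : (Fin m → ℝ) →ₗ[ℝ] E :=
  ∑ i, LinearMap.smulRight (LinearMap.proj i) (f i)

lemma sumSmulMap_apply {m : ℕ} {E : Type*} [AddCommGroup E] [Module ℝ E]
    (f : Fin m → E) (w : Fin m → ℝ) : sumSmulMap f w = ∑ i, w i • f i := by
  simp [sumSmulMap]

theorem simplex_volume (n : ℕ)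
    (v : Fin (n + 1) → EuclideanSpace ℝ (Fin n))
    (Q : Matrix (Fin n) (Fin n) ℝ)
    (hQ : ∀ i j, Q i j =
      ⟪v i.castSucc - v (Fin.last n), v j.castSucc - v (Fin.last n)⟫) :
    volume (convexHull ℝ (Set.range v)) =
      ENNReal.ofReal (Real.sqrt Q.det / (Nat.factorial n)) := by
  classical
  set u : Fin n → EuclideanSpace ℝ (Fin n) := fun i => v i.castSucc - v (Fin.last n) with hu
  set eqv : EuclideanSpace ℝ (Fin n) ≃ₗ[ℝ] (Fin n → ℝ) :=
    WithLp.linearEquiv 2 ℝ (Fin n → ℝ) with heqv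
  set L : EuclideanSpace ℝ (Fin n) →ₗ[ℝ] EuclideanSpace ℝ (Fin n) :=
    (sumSmulMap u).comp eqv.toLinearMap with hL
  set g : (Fin (n + 1) → ℝ) →ₗ[ℝ] EuclideanSpace ℝ (Fin n) := sumSmulMap v with hg
  set S : Set (EuclideanSpace ℝ (Fin n)) := eqv ⁻¹' cornerSet n 1 with hS
  have hgδ : ∀ (i : Fin (n + 1)) (p : Fin (n + 1) → ℝ),
      (∀ j, p j = if i = j then 1 else 0) → g p = v i := by
    intro i p hp
    rw [hg, sumSmulMap_apply]
    have : ∀ j, p j • v j = (if i = j then (1:ℝ) else 0) • v j := fun j => by rw [hp j]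
    rw [Finset.sum_congr rfl fun j _ => this j]
    simp [ite_smul]
  -- Step A : the convex hull is the image of the standard simplex under `g`
  have stepA : convexHull ℝ (Set.range v) = g '' stdSimplex ℝ (Fin (n + 1)) := by
    rw [← convexHull_basis_eq_stdSimplex (R := ℝ) (Fin (n + 1)),
      LinearMap.image_convexHull, ← Set.range_comp]
    congr 1
    funext y
    exact propext ⟨fun ⟨j, h⟩ => ⟨j, ((hgδ j _ fun k => by by_cases hjk : j = k <;>
        simp [hjk]).trans h : _)⟩,
      fun ⟨j, h⟩ => ⟨j, ((hgδ j _ fun k => by by_cases hjk : j = k <;>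
        simp [hjk]).symm.trans h : _)⟩⟩
  -- key algebraic identity
  have key : ∀ w : Fin (n + 1) → ℝ, ∑ i, w i = 1 →
      g w = v (Fin.last n) + L (eqv.symm fun i => w i.castSucc) := by
    intro w hw
    have hlast : w (Fin.last n) = 1 - ∑ i : Fin n, w i.castSucc := by
      have h := Fin.sum_univ_castSucc (f := w)
      rw [hw] at h
      linarith
    have hLx : L (eqv.symm fun i => w i.castSucc) = ∑ i, w i.castSucc • u i := by
      rw [hL, LinearMap.comp_apply]
      have : eqv.toLinearMap (eqv.symm fun i => w i.castSucc) = fun i => w i.castSucc :=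
        eqv.apply_symm_apply _
      rw [this, sumSmulMap_apply]
    rw [hg, sumSmulMap_apply, hLx, Fin.sum_univ_castSucc (f := fun i => w i • v i), hlast]
    simp only [hu, smul_sub, Finset.sum_sub_distrib, ← Finset.sum_smul, sub_smul, one_smul]
    abel
  -- Step B : image description
  have stepB : g '' stdSimplex ℝ (Fin (n + 1))
      = (fun y => v (Fin.last n) + y) '' (L '' S) := by
    ext z
    constructor
    · rintro ⟨w, hw, rfl⟩
      refine ⟨L (eqv.symm fun i => w i.castSucc),
        ⟨eqv.symm fun i => w i.castSucc, ?_, rfl⟩, (key w hw.2).symm⟩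
      rw [hS, Set.mem_preimage, eqv.apply_symm_apply]
      refine ⟨fun i => hw.1 _, ?_⟩
      have h := Fin.sum_univ_castSucc (f := w)
      rw [hw.2] at h
      have := hw.1 (Fin.last n)
      linarith
    · rintro ⟨_, ⟨x, hx, rfl⟩, rfl⟩
      set w : Fin (n + 1) → ℝ :=
        Fin.snoc (fun j => eqv x j) (1 - ∑ j, eqv x j) with hwdef
      have hwc : ∀ i : Fin n, w i.castSucc = eqv x i := fun i => Fin.snoc_castSucc _ _ _
      have hwl : w (Fin.last n) = 1 - ∑ j, eqv x j := Fin.snoc_last _ _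
      have hxmem : (∀ i, 0 ≤ eqv x i) ∧ ∑ i, eqv x i ≤ 1 := hx
      have hwsum : ∑ i, w i = 1 := by
        rw [Fin.sum_univ_castSucc (f := w), hwl]
        simp only [hwc]
        ring
      have hwmem : w ∈ stdSimplex ℝ (Fin (n + 1)) := by
        refine ⟨fun i => ?_, hwsum⟩
        refine Fin.lastCases ?_ ?_ i
        · rw [hwl]; linarith [hxmem.2]
        · intro j; rw [hwc]; exact hxmem.1 j
      refine ⟨w, hwmem, ?_⟩
      have : (fun i => w i.castSucc) = eqv x := funext hwc
      rw [key w hwsum, this, eqv.symm_apply_apply]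
  -- Step C : volume computation
  have hSmeas : volume S = ENNReal.ofReal (1 / n.factorial) := by
    have hpre : S = (MeasurableEquiv.toLp 2 (Fin n → ℝ)).symm ⁻¹' cornerSet n 1 := rfl
    rw [hpre, (EuclideanSpace.volume_preserving_symm_measurableEquiv_toLp (Fin n)).measure_preimage
      (measurableSet_cornerSet n 1).nullMeasurableSet,
      volume_cornerSet n 1 zero_le_one]
    simp
  have hvol : volume (convexHull ℝ (Set.range v))
      = ENNReal.ofReal |LinearMap.det L| * ENNReal.ofReal (1 / n.factorial) := by
    rw [stepA, stepB]
    have htrans : volume ((fun y => v (Fin.last n) + y) '' (L '' S)) = volume (L '' S) := by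
      rw [Set.image_add_left, measure_preimage_add]
    rw [htrans, Measure.addHaar_image_linearMap, hSmeas]
  -- Step D : determinant identity
  set A : Matrix (Fin n) (Fin n) ℝ := Matrix.of fun k i => u i k with hA
  have hdet : LinearMap.det L = A.det := by
    set b : Module.Basis (Fin n) ℝ (EuclideanSpace ℝ (Fin n)) :=
      (EuclideanSpace.basisFun (Fin n) ℝ).toBasis with hb
    rw [← LinearMap.det_toMatrix b]
    congr 1
    ext k i
    rw [LinearMap.toMatrix_apply]
    have hbbasis : b i = EuclideanSpace.single i 1 := by
      rw [hb, OrthonormalBasis.coe_toBasis, EuclideanSpace.basisFun_apply]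
    have hLb : L (b i) = u i := by
      rw [hbbasis, hL, LinearMap.comp_apply, sumSmulMap_apply]
      have : ∀ j, (eqv.toLinearMap (EuclideanSpace.single i 1)) j
          = if j = i then (1 : ℝ) else 0 := fun j => EuclideanSpace.single_apply i 1 j
      simp only [this, ite_smul, one_smul, zero_smul]
      rw [Finset.sum_ite_eq' Finset.univ i (fun j => u j)]
      simp
    rw [hLb, hb, OrthonormalBasis.coe_toBasis_repr_apply, EuclideanSpace.basisFun_repr]
    simp [hA]
  have hQA : Q = Matrix.transpose A * A := by
    ext i j
    rw [hQ i j, Matrix.mul_apply]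
    simp only [Matrix.transpose_apply, Matrix.of_apply, hA, hu, PiLp.inner_apply,
      RCLike.inner_apply, conj_trivial]
    exact Finset.sum_congr rfl fun x _ => mul_comm _ _
  have hsqrt : Real.sqrt Q.det = |A.det| := by
    rw [hQA, Matrix.det_mul, Matrix.det_transpose, Real.sqrt_mul_self_eq_abs]
  rw [hvol, hdet, hsqrt, ← ENNReal.ofReal_mul (abs_nonneg _)]
  congr 1
  field_simp
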